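/- Let 0 < α < π/2 and let z be a nonzero complex number with |arg(z)| < α. Then |(1 − e^{−z}) / (1 + e^{−z})| ≤ 2|z| / ( (1 + |z|·cos(α)) · (1 − e^{−π/(2·tan(α))}) ). -/

import Mathlib

open Complex Real

lemma aux_exp_ineq (x : ℝ) (hx : 0 ≤ x) : (1 - Real.exp (-x)) * (1 + x) ≤ 2 * x := by
  have h := Real.add_one_le_exp (-x)
  have h2 := (Real.exp_pos (-x)).le
  nlinarith [sq_nonneg x, sq_nonneg (1 - x)]

lemma aux_abs_one_sub_exp (z : ℂ) (hx : 0 < z.re) :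
    ‖1 - Complex.exp (-z)‖ ≤ ‖z‖ * ((1 - Real.exp (-z.re)) / z.re) := by
  have hd : ∀ t ∈ Set.uIcc (0:ℝ) 1,
      HasDerivAt (fun t : ℝ => -Complex.exp (-((t : ℂ) * z))) (z * Complex.exp (-((t:ℂ) * z))) t := by
    intro t _
    have h1 : HasDerivAt (fun t : ℝ => -((t:ℂ) * z)) (-z) t := by
      simpa [Pi.neg_def] using ((Complex.ofRealCLM.hasDerivAt (x := t)).mul_const z).neg
    have h2 := (Complex.hasDerivAt_exp (-((t:ℂ) * z))).comp t h1
    have h3 := h2.neg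
    simpa [mul_comm, Pi.neg_def, Function.comp_def] using h3
  have hint : ∫ t in (0:ℝ)..1, z * Complex.exp (-((t:ℂ) * z)) = 1 - Complex.exp (-z) := by
    rw [intervalIntegral.integral_eq_sub_of_hasDerivAt hd
      (Continuous.intervalIntegrable (by continuity) 0 1)]
    simp
    ring
  have hdr : ∀ t ∈ Set.uIcc (0:ℝ) 1,
      HasDerivAt (fun t : ℝ => -Real.exp (-(t * z.re)) / z.re) (Real.exp (-(t * z.re))) t := by
    intro t _
    have h1 : HasDerivAt (fun t : ℝ => -(t * z.re)) (-z.re) t := by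
      simpa [Pi.neg_def] using ((hasDerivAt_id t).mul_const z.re).neg
    have h2 := (Real.hasDerivAt_exp (-(t * z.re))).comp t h1
    have h3 := (h2.neg).div_const z.re
    convert h3 using 1
    · rfl
    · rfl
    · rfl
    · field_simp
  have hintr : ∫ t in (0:ℝ)..1, Real.exp (-(t * z.re)) = (1 - Real.exp (-z.re)) / z.re := by
    rw [intervalIntegral.integral_eq_sub_of_hasDerivAt hdr
      (Continuous.intervalIntegrable (by continuity) 0 1)]
    field_simp
    rw [mul_zero, neg_zero, Real.exp_zero]; ring
  calc ‖1 - Complex.exp (-z)‖ = ‖∫ t in (0:ℝ)..1, z * Complex.exp (-((t:ℂ) * z))‖ := by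
        rw [hint]
    _ ≤ |∫ t in (0:ℝ)..1, ‖z‖ * Real.exp (-(t * z.re))| := by
        refine intervalIntegral.norm_integral_le_abs_of_norm_le ?_
          ((by continuity : Continuous fun t : ℝ =>
            ‖z‖ * Real.exp (-(t * z.re))).intervalIntegrable 0 1)
        refine Filter.Eventually.of_forall fun t => ?_
        have : ‖z * Complex.exp (-((t:ℂ) * z))‖ = ‖z‖ * Real.exp (-(t * z.re)) := by
          rw [norm_mul]
          simp [Complex.norm_exp]
        exact le_of_eq this
    _ = ‖z‖ * ((1 - Real.exp (-z.re)) / z.re) := by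
        rw [intervalIntegral.integral_const_mul, hintr, _root_.abs_of_nonneg]
        have h0 : Real.exp (-z.re) ≤ Real.exp 0 := Real.exp_le_exp.2 (by linarith)
        rw [Real.exp_zero] at h0
        apply mul_nonneg (norm_nonneg z) (div_nonneg (by linarith) hx.le)

theorem abs_ratio_le (α : ℝ) (hα : 0 < α) (hα' : α < Real.pi / 2)
    (z : ℂ) (hz : z ≠ 0) (harg : |Complex.arg z| < α) :
    ‖(1 - Complex.exp (-z)) / (1 + Complex.exp (-z))‖ ≤
      2 * ‖z‖ /
        ((1 + ‖z‖ * Real.cos α) * (1 - Real.exp (-Real.pi / (2 * Real.tan α)))) := by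
  have hpi := Real.pi_pos
  have hr : 0 < ‖z‖ := norm_pos_iff.mpr hz
  have hcosα : 0 < Real.cos α := Real.cos_pos_of_mem_Ioo ⟨by linarith, hα'⟩
  have htanα : 0 < Real.tan α := Real.tan_pos_of_pos_of_lt_pi_div_two hα hα'
  have hcos : Real.cos α ≤ Real.cos (Complex.arg z) := by
    rw [← Real.cos_abs (Complex.arg z)]
    exact Real.cos_le_cos_of_nonneg_of_le_pi (abs_nonneg _) (by linarith) harg.le
  have hxr : ‖z‖ * Real.cos α ≤ z.re := by
    calc ‖z‖ * Real.cos α ≤ ‖z‖ * Real.cos (Complex.arg z) := by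
          exact mul_le_mul_of_nonneg_left hcos hr.le
      _ = z.re := Complex.norm_mul_cos_arg z
  have hx : 0 < z.re := lt_of_lt_of_le (by positivity) hxr
  -- upper bound for numerator
  have hA : ‖1 - Complex.exp (-z)‖ ≤
      2 * ‖z‖ / (1 + ‖z‖ * Real.cos α) := by
    have h1 := aux_abs_one_sub_exp z hx
    have h2 : (1 - Real.exp (-z.re)) / z.re ≤ 2 / (1 + z.re) := by
      rw [div_le_div_iff₀ hx (by positivity)]
      nlinarith [aux_exp_ineq z.re hx.le]
    calc ‖1 - Complex.exp (-z)‖ ≤ ‖z‖ * ((1 - Real.exp (-z.re)) / z.re) := h1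
      _ ≤ ‖z‖ * (2 / (1 + z.re)) := by
          exact mul_le_mul_of_nonneg_left h2 hr.le
      _ = 2 * ‖z‖ / (1 + z.re) := by ring
      _ ≤ 2 * ‖z‖ / (1 + ‖z‖ * Real.cos α) := by
          gcongr
  -- lower bound for denominator
  have hE : Real.exp (-Real.pi / (2 * Real.tan α)) < 1 := by
    rw [Real.exp_lt_one_iff]
    have : 0 < 2 * Real.tan α := by positivity
    exact div_neg_of_neg_of_pos (by linarith) this
  have hEpos := Real.exp_pos (-Real.pi / (2 * Real.tan α))
  have hB : 1 - Real.exp (-Real.pi / (2 * Real.tan α)) ≤ ‖1 + Complex.exp (-z)‖ := by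
    by_cases hy : |z.im| < Real.pi / 2
    · have hcosy : 0 ≤ Real.cos (-z.im) := by
        apply Real.cos_nonneg_of_mem_Icc
        constructor
        · rw [← abs_neg] at hy; have := abs_lt.1 hy; linarith [this.1]
        · rw [← abs_neg] at hy; have := abs_lt.1 hy; linarith [this.2]
      have hre : ((1:ℂ) + Complex.exp (-z)).re = 1 + Real.exp (-z.re) * Real.cos (-z.im) := by
        simp [Complex.exp_re]
      have h1 : (1:ℝ) ≤ ((1:ℂ) + Complex.exp (-z)).re := by
        rw [hre]
        have := Real.exp_pos (-z.re)
        nlinarith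
      have h2 := Complex.re_le_norm ((1:ℂ) + Complex.exp (-z))
      linarith
    · push_neg at hy
      have htan : |z.im| < z.re * Real.tan α := by
        have h1 : Real.tan |Complex.arg z| < Real.tan α :=
          Real.tan_lt_tan_of_nonneg_of_lt_pi_div_two (abs_nonneg _) hα' harg
        have hargb : -(Real.pi/2) < Complex.arg z ∧ Complex.arg z < Real.pi/2 := by
          have h := abs_lt.1 harg
          constructor <;> linarith [h.1, h.2]
        have h2 : Real.tan |Complex.arg z| = |z.im| / z.re := by
          have he : |z.im| / z.re = |z.im / z.re| := by rw [abs_div, abs_of_pos hx]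
          rw [he, ← Complex.tan_arg]
          rcases le_or_gt 0 (Complex.arg z) with h | h
          · rw [_root_.abs_of_nonneg h,
              _root_.abs_of_nonneg (Real.tan_nonneg_of_nonneg_of_le_pi_div_two h hargb.2.le)]
          · rw [_root_.abs_of_neg h,
              _root_.abs_of_neg (Real.tan_neg_of_neg_of_pi_div_two_lt h hargb.1), Real.tan_neg]
        rw [h2, div_lt_iff₀ hx] at h1
        linarith [h1]
      have hxπ : Real.pi / (2 * Real.tan α) ≤ z.re := by
        rw [div_le_iff₀ (by positivity)]
        nlinarith
      have habs : ‖Complex.exp (-z)‖ = Real.exp (-z.re) := by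
        simp [Complex.norm_exp]
      have htri : 1 - ‖Complex.exp (-z)‖ ≤ ‖1 + Complex.exp (-z)‖ := by
        have h := norm_add_le ((1:ℂ) + Complex.exp (-z)) (-(Complex.exp (-z)))
        simp only [add_neg_cancel_right] at h
        simp only [norm_neg] at h
        have h1 : ‖(1:ℂ)‖ = 1 := by simp
        rw [h1] at h
        have : ‖(1:ℂ) + Complex.exp (-z)‖ = ‖1 + Complex.exp (-z)‖ := rfl
        have h2 : ‖Complex.exp (-z)‖ = ‖Complex.exp (-z)‖ := rfl
        linarith [h]
      have hmon : Real.exp (-z.re) ≤ Real.exp (-Real.pi / (2 * Real.tan α)) := by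
        apply Real.exp_le_exp.2
        rw [neg_div]
        linarith
      rw [habs] at htri
      linarith
  have hden2 : 0 < 1 - Real.exp (-Real.pi / (2 * Real.tan α)) := by linarith
  rw [norm_div]
  calc ‖1 - Complex.exp (-z)‖ / ‖1 + Complex.exp (-z)‖ ≤
      (2 * ‖z‖ / (1 + ‖z‖ * Real.cos α)) /
        (1 - Real.exp (-Real.pi / (2 * Real.tan α))) := by
        apply div_le_div₀ (by positivity) hA hden2 hB
    _ = 2 * ‖z‖ /
        ((1 + ‖z‖ * Real.cos α) * (1 - Real.exp (-Real.pi / (2 * Real.tan α)))) := by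
        rw [div_div]
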